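/- Let μ be a probability measure on the group G₂ = (ℤ/2ℤ)² whose support is all of G₂ (contains exactly 4 elements) and such that max_{x∈G₂} μ({x}) = 1/2. Then μ ∉ TEC(G₂). -/

import Mathlib

open scoped BigOperators

/-- The group `G₂ = (ℤ/2ℤ)²`. -/
abbrev G2 : Type := ZMod 2 × ZMod 2

/-- The character pairing `(x,y) = (-1)^(x₁y₁+x₂y₂)`. -/
noncomputable def pairing2 (x y : G2) : ℝ :=
  (-1 : ℝ) ^ (x.1.val * y.1.val + x.2.val * y.2.val)

/-- A probability measure on `G₂`, given by its mass function. -/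
def IsProb2 (p : G2 → ℝ) : Prop := (∀ x, 0 ≤ p x) ∧ ∑ x : G2, p x = 1

/-- The characteristic function `μ̂(y) = Σ_x (x,y) μ({x})`. -/
noncomputable def charFn2 (p : G2 → ℝ) (y : G2) : ℝ := ∑ x : G2, pairing2 x y * p x

/-- The measure of a set `E ⊆ G₂`. -/
noncomputable def measOf2 (p : G2 → ℝ) (E : Set G2) : ℝ := ∑ x : G2, E.indicator p x

/-- `μ` has a trivial equivalence class: every probability measure `ν` with
`|ν̂| = |μ̂|` is a shift `μₓ` of `μ` (central symmetry is the identity on `G₂`). -/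
def TEC2 (p : G2 → ℝ) : Prop :=
  ∀ q : G2 → ℝ, IsProb2 q → (∀ y : G2, |charFn2 q y| = |charFn2 p y|) →
    ∃ x : G2, ∀ e : G2, q e = p (e + x)

/-- The support of `μ`: the set of points of positive mass. -/
def support2 (p : G2 → ℝ) : Set G2 := {x : G2 | 0 < p x}

/-- `a_max = max_{x∈G₂} μ({x})`. -/
noncomputable def amax2 (p : G2 → ℝ) : ℝ := sSup (Set.range p)

lemma sum_G2 (f : G2 → ℝ) : ∑ x : G2, f x = f (0,0) + f (0,1) + f (1,0) + f (1,1) := by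
  rw [Fintype.sum_prod_type]
  rw [show ((Finset.univ : Finset (ZMod 2))) = {0, 1} by decide]
  simp [Finset.sum_insert, Finset.sum_pair]
  ring

/-- if the support of `μ` is all of `G₂` and `a_max = 1/2`,
then `μ ∉ TEC(G₂)`. -/
theorem stmt18 (p : G2 → ℝ) (hp : IsProb2 p)
    (hsupp : support2 p = Set.univ) (hmax : amax2 p = 1/2) :
    ¬ TEC2 p := by
  intro htec
  obtain ⟨hpos, hsum⟩ := hp
  have hbdd : BddAbove (Set.range p) := (Set.finite_range p).bddAbove
  have hle : ∀ x, p x ≤ 1/2 := fun x => by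
    have := le_csSup hbdd ⟨x, rfl⟩
    rwa [show sSup (Set.range p) = amax2 p from rfl, hmax] at this
  -- the maximum is attained
  obtain ⟨m, hm⟩ : ∃ m : G2, ∀ x, p x ≤ p m := Finite.exists_max p
  have hpm : p m = 1/2 := by
    refine le_antisymm (hle m) ?_
    rw [← hmax]
    exact csSup_le ⟨p m, m, rfl⟩ (fun a ⟨x, hx⟩ => hx ▸ hm x)
  -- the counterexample measure
  set q : G2 → ℝ := fun e => 1/2 - p e with hq
  have hqprob : IsProb2 q := by
    constructor
    · intro x; simp only [hq]; linarith [hle x]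
    · rw [sum_G2]
      rw [sum_G2] at hsum
      simp only [hq]; linarith
  have hchar : ∀ y : G2, |charFn2 q y| = |charFn2 p y| := by
    intro y
    have hsplit : charFn2 q y = (∑ x : G2, pairing2 x y) * (1/2) - charFn2 p y := by
      simp only [charFn2, hq, mul_sub, Finset.sum_sub_distrib, Finset.sum_mul]
    by_cases hy : y = 0
    · subst hy
      have h1 : ∑ x : G2, pairing2 x 0 = 4 := by
        rw [sum_G2]; simp [pairing2]; norm_num
      have h2 : charFn2 p 0 = 1 := by
        simp only [charFn2]
        rw [show (0 : G2) = ((0 : ZMod 2), (0 : ZMod 2)) from rfl]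
        simp only [pairing2]
        simpa using hsum
      rw [hsplit, h2]
      rw [show (0 : G2) = ((0 : ZMod 2), (0 : ZMod 2)) from rfl] at h1 ⊢
      rw [h1]; norm_num
    · have h1 : ∑ x : G2, pairing2 x y = 0 := by
        fin_cases y
        · exact absurd rfl hy
        all_goals rw [sum_G2]; simp [pairing2, show ((1:ZMod 2)).val = 1 from rfl]; norm_num [ZMod.val, Fin.val]
      rw [hsplit, h1]
      simp [abs_sub_comm]
  obtain ⟨x, hx⟩ := htec q hqprob hchar
  have hxx : x + x = 0 := by
    have : ∀ z : G2, z + z = 0 := by decide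
    exact this x
  have h3 := hx (m + x)
  rw [add_assoc, hxx, add_zero] at h3
  have hppos : 0 < p (m + x) := by
    have : (m + x) ∈ support2 p := by rw [hsupp]; trivial
    exact this
  simp only [hq] at h3
  rw [hpm] at h3
  linarith
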